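/- Let F₁ ≠ F₂ be points in the Euclidean plane and O the midpoint of F₁F₂. The image of the equilateral hyperbola with foci F₁, F₂ (the set {Y | |dist Y F₁ − dist Y F₂| = dist F₁ F₂ / √2}) under inversion in the circle with center O and radius dist O F₁ is exactly the lemniscate of Bernoulli with foci F₁, F₂ (the set {X | dist X F₁ * dist X F₂ = (dist F₁ F₂ / 2)^2}) with the point O removed. -/

import Mathlib

open EuclideanGeometry Real

private lemma apollonius_mid (F₁ F₂ O Y : EuclideanSpace ℝ (Fin 2))
    (hO : O = midpoint ℝ F₁ F₂) :
    dist Y F₁ ^ 2 + dist Y F₂ ^ 2 = 2 * (dist Y O ^ 2 + (dist F₁ F₂ / 2) ^ 2) := by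
  rw [hO]
  exact EuclideanGeometry.dist_sq_add_dist_sq_eq_two_mul_dist_midpoint_sq_add_half_dist_sq Y F₁ F₂

/-- The image of the equilateral hyperbola with foci `F₁`, `F₂` under inversion in
the circle with center `O = midpoint F₁ F₂` and radius `|OF₁|` is the lemniscate of
Bernoulli with foci `F₁`, `F₂`, with the double point `O` removed. -/
theorem inversion_image_equilateral_hyperbola_eq_lemniscate
    (F₁ F₂ O : EuclideanSpace ℝ (Fin 2))
    (hF : F₁ ≠ F₂)
    (hO : O = midpoint ℝ F₁ F₂) :
    EuclideanGeometry.inversion O (dist O F₁) ''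
        {Y : EuclideanSpace ℝ (Fin 2) |
          |dist Y F₁ - dist Y F₂| = dist F₁ F₂ / Real.sqrt 2} =
      {X : EuclideanSpace ℝ (Fin 2) |
          dist X F₁ * dist X F₂ = (dist F₁ F₂ / 2) ^ 2} \ {O} := by
  set c : ℝ := dist O F₁ with hc
  have hc1 : dist O F₁ = dist F₁ F₂ / 2 := by
    rw [hO, dist_comm, dist_left_midpoint]; norm_num; ring
  have hc2 : dist O F₂ = dist F₁ F₂ / 2 := by
    rw [hO, dist_comm, dist_right_midpoint]; norm_num; ring
  have hcpos : 0 < c := by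
    rw [hc, hc1]; have := dist_pos.mpr hF; linarith
  have hOF₁ : 0 < dist O F₁ := hc ▸ hcpos
  have hOF₂ : 0 < dist O F₂ := by rw [hc2, ← hc1]; exact hOF₁
  have hF₁O : F₁ ≠ O := (dist_pos.mp hOF₁).symm
  have hF₂O : F₂ ≠ O := (dist_pos.mp hOF₂).symm
  have hs2 : (0:ℝ) < Real.sqrt 2 := Real.sqrt_pos.mpr (by norm_num)
  have hs2sq : Real.sqrt 2 ^ 2 = 2 := Real.sq_sqrt (by norm_num)
  have hmul2 : Real.sqrt 2 * Real.sqrt 2 = 2 := Real.mul_self_sqrt (by norm_num)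
  have hFF : dist F₁ F₂ = 2 * c := by rw [hc, hc1]; ring
  have sq_iff : ∀ x y : ℝ, 0 ≤ x → 0 ≤ y → (x = y ↔ x ^ 2 = y ^ 2) := by
    intro x y hx hy
    constructor
    · rintro rfl; rfl
    · intro h; nlinarith
  ext X
  constructor
  · rintro ⟨Y, hY, rfl⟩
    simp only [Set.mem_setOf_eq] at hY
    have hYO : Y ≠ O := by
      intro h
      rw [h, hc1, hc2, sub_self, abs_zero] at hY
      have : 0 < dist F₁ F₂ / Real.sqrt 2 := div_pos (dist_pos.mpr hF) hs2
      linarith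
    have hd : 0 < dist Y O := dist_pos.mpr hYO
    have hap := apollonius_mid F₁ F₂ O Y hO
    rw [hFF] at hap
    have hprod : dist Y F₁ * dist Y F₂ = dist Y O ^ 2 := by
      have h2 : |dist Y F₁ - dist Y F₂| ^ 2 = (dist F₁ F₂ / Real.sqrt 2) ^ 2 := by rw [hY]
      rw [sq_abs, div_pow, hs2sq, hFF] at h2
      linear_combination hap / 2 - h2 / 2
    have e1 : dist (inversion O c Y) F₁ = c ^ 2 / (dist Y O * c) * dist Y F₁ := by
      conv_lhs => rw [show F₁ = inversion O c F₁ by rw [hc]; exact (inversion_dist_center' O F₁).symm]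
      rw [dist_inversion_inversion hYO hF₁O, dist_comm F₁ O, ← hc]
    have e2 : dist (inversion O c Y) F₂ = c ^ 2 / (dist Y O * c) * dist Y F₂ := by
      conv_lhs => rw [show F₂ = inversion O c F₂ by rw [hc, hc1, ← hc2]; exact (inversion_dist_center' O F₂).symm]
      rw [dist_inversion_inversion hYO hF₂O, dist_comm F₂ O, hc2, ← hc1, ← hc]
    constructor
    · simp only [Set.mem_setOf_eq]
      rw [e1, e2, ← hc1, ← hc]
      have h9 : c ^ 2 / (dist Y O * c) * dist Y F₁ * (c ^ 2 / (dist Y O * c) * dist Y F₂)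
          = c ^ 2 * (dist Y F₁ * dist Y F₂) / dist Y O ^ 2 := by
        field_simp
      rw [h9, hprod]
      field_simp
    · simp only [Set.mem_singleton_iff]
      exact fun h => hYO ((inversion_eq_center hcpos.ne').mp h)
  · rintro ⟨hX, hXO⟩
    simp only [Set.mem_setOf_eq] at hX
    simp only [Set.mem_singleton_iff] at hXO
    refine ⟨inversion O c X, ?_, inversion_inversion O hcpos.ne' X⟩
    simp only [Set.mem_setOf_eq]
    have hD : 0 < dist X O := dist_pos.mpr hXO
    have e1 : dist (inversion O c X) F₁ = c ^ 2 / (dist X O * c) * dist X F₁ := by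
      conv_lhs => rw [show F₁ = inversion O c F₁ by rw [hc]; exact (inversion_dist_center' O F₁).symm]
      rw [dist_inversion_inversion hXO hF₁O, dist_comm F₁ O, ← hc]
    have e2 : dist (inversion O c X) F₂ = c ^ 2 / (dist X O * c) * dist X F₂ := by
      conv_lhs => rw [show F₂ = inversion O c F₂ by rw [hc, hc1, ← hc2]; exact (inversion_dist_center' O F₂).symm]
      rw [dist_inversion_inversion hXO hF₂O, dist_comm F₂ O, hc2, ← hc1, ← hc]
    have hap := apollonius_mid F₁ F₂ O X hO
    rw [hFF] at hap
    have hprod : dist X F₁ * dist X F₂ = c ^ 2 := by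
      rw [hX, hFF]; ring
    have habs : |dist X F₁ - dist X F₂| = Real.sqrt 2 * dist X O := by
      rw [sq_iff _ _ (abs_nonneg _) (by positivity)]
      rw [sq_abs, mul_pow, hs2sq]
      linear_combination hap - 2 * hprod
    rw [e1, e2, ← mul_sub, abs_mul, habs]
    rw [abs_of_pos (by positivity), hFF]
    field_simp
    linear_combination hmul2
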